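/- If 1 < x < e^(1/e), then the sequence defined by y₁ = x and y_{n+1} = x^(y_n) is monotone increasing and bounded above, hence converges to a limit y satisfying y = x^y. -/
import Mathlib


open Filter Real

theorem power_tower_converges (x : ℝ) (hx1 : 1 < x) (hx2 : x < Real.exp (Real.exp 1)⁻¹)
    (y : ℕ → ℝ) (h1 : y 1 = x) (hrec : ∀ n, 1 ≤ n → y (n + 1) = x ^ y n) :
    (∀ m n, 1 ≤ m → m ≤ n → y m ≤ y n) ∧
    (∃ B : ℝ, ∀ n, 1 ≤ n → y n ≤ B) ∧
    (∃ L : ℝ, Filter.Tendsto y Filter.atTop (nhds L) ∧ L = x ^ L) := by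
  have hx0 : 0 < x := lt_trans one_pos hx1
  have hlogx : Real.log x < (Real.exp 1)⁻¹ := by
    have := Real.log_lt_log hx0 hx2
    rwa [Real.log_exp] at this
  have hxe : x < Real.exp 1 := by
    calc x < Real.exp (Real.exp 1)⁻¹ := hx2
    _ ≤ Real.exp 1 := by
      apply Real.exp_le_exp.2
      rw [inv_le_one_iff₀]
      right; exact Real.one_le_exp (by norm_num)
  -- bound: for n ≥ 1, 1 ≤ y n and y n ≤ e
  have hbound : ∀ n, 1 ≤ n → 1 ≤ y n ∧ y n ≤ Real.exp 1 := by
    intro n hn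
    induction n with
    | zero => omega
    | succ m ih =>
      rcases Nat.eq_or_lt_of_le hn with h | h
      · constructor
        · rw [show m + 1 = 1 by omega, h1]; exact hx1.le
        · rw [show m + 1 = 1 by omega, h1]; exact hxe.le
      · have hm : 1 ≤ m := by omega
        obtain ⟨ih1, ih2⟩ := ih hm
        rw [hrec m hm]
        constructor
        · calc (1:ℝ) = x ^ (0:ℝ) := (Real.rpow_zero x).symm
          _ ≤ x ^ y m := Real.rpow_le_rpow_of_exponent_le hx1.le (by linarith)
        · calc x ^ y m ≤ x ^ Real.exp 1 :=
            Real.rpow_le_rpow_of_exponent_le hx1.le ih2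
          _ = Real.exp (Real.exp 1 * Real.log x) := by
            rw [Real.rpow_def_of_pos hx0, mul_comm]
          _ ≤ Real.exp 1 := by
            apply Real.exp_le_exp.2
            have he : (0:ℝ) < Real.exp 1 := Real.exp_pos 1
            calc Real.exp 1 * Real.log x ≤ Real.exp 1 * (Real.exp 1)⁻¹ := by
                  apply mul_le_mul_of_nonneg_left hlogx.le he.le
            _ = 1 := mul_inv_cancel₀ he.ne'
  -- step: y n ≤ y (n+1) for n ≥ 1
  have hstep : ∀ n, 1 ≤ n → y n ≤ y (n + 1) := by
    intro n hn
    induction n with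
    | zero => omega
    | succ m ih =>
      rcases Nat.eq_or_lt_of_le hn with h | h
      · have h1' : m + 1 = 1 := h.symm
        rw [h1', h1, hrec 1 le_rfl, h1]
        calc x = x ^ (1:ℝ) := (Real.rpow_one x).symm
        _ ≤ x ^ x := Real.rpow_le_rpow_of_exponent_le hx1.le hx1.le
      · have hm : 1 ≤ m := by omega
        rw [hrec m hm, hrec (m+1) (by omega)]
        exact Real.rpow_le_rpow_of_exponent_le hx1.le (ih hm)
  have hmono : ∀ m n, 1 ≤ m → m ≤ n → y m ≤ y n := by
    intro m n hm hmn
    induction n with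
    | zero => omega
    | succ k ih =>
      rcases Nat.eq_or_lt_of_le hmn with h | h
      · rw [h]
      · have hk : m ≤ k := by omega
        exact le_trans (ih hk) (hstep k (by omega))
  refine ⟨hmono, ⟨Real.exp 1, fun n hn => (hbound n hn).2⟩, ?_⟩
  -- consider z n = y (n+1)
  set z : ℕ → ℝ := fun n => y (n + 1) with hz
  have hzmono : Monotone z := by
    apply monotone_nat_of_le_succ
    intro n
    exact hstep (n+1) (by omega)
  have hzbdd : BddAbove (Set.range z) := by
    refine ⟨Real.exp 1, ?_⟩
    rintro _ ⟨n, rfl⟩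
    exact (hbound (n+1) (by omega)).2
  have hztend : Tendsto z atTop (nhds (⨆ n, z n)) :=
    tendsto_atTop_ciSup hzmono hzbdd
  set L := ⨆ n, z n with hL
  have hytend : Tendsto y atTop (nhds L) := by
    rwa [← tendsto_add_atTop_iff_nat 1]
  refine ⟨L, hytend, ?_⟩
  have h2 : Tendsto (fun n => x ^ z n) atTop (nhds (x ^ L)) := by
    have hc : ContinuousAt (fun t : ℝ => x ^ t) L :=
      Real.continuousAt_const_rpow hx0.ne'
    exact hc.tendsto.comp hztend
  have h3 : Tendsto (fun n => x ^ z n) atTop (nhds L) := by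
    have : (fun n => x ^ z n) = fun n => z (n + 1) := by
      funext n
      simp only [hz]
      rw [hrec (n+1) (by omega)]
    rw [this, tendsto_add_atTop_iff_nat 1]
    exact hztend
  exact tendsto_nhds_unique h3 h2
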